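/- The barrier level β₀* satisfies the smooth-fit identities (β₀*/α₀)^{ζ₂−ζ₁} = ζ₁(ζ₁−1)/(ζ₂(ζ₂−1)), equivalently ζ₁(ζ₁−1)(β₀*/α₀)^{ζ₁} = ζ₂(ζ₂−1)(β₀*/α₀)^{ζ₂}, and consequently ∂²G/∂x₁² (β₀*x₂, x₂; β₀*) = 0 for all x₂ > 0. -/

import Mathlib

/-- The value function `G(x₁, x₂; β)` of the barrier strategy with barrier `β`
and ruin level `α₀`. -/
noncomputable def Gb (α₀ ζ₁ ζ₂ β x₁ x₂ : ℝ) : ℝ :=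
  α₀ * x₂ * ((x₁ / (α₀ * x₂)) ^ ζ₁ - (x₁ / (α₀ * x₂)) ^ ζ₂) /
    (ζ₁ * (β / α₀) ^ (ζ₁ - 1) - ζ₂ * (β / α₀) ^ (ζ₂ - 1))

private lemma aux_hasDerivAt (a p t : ℝ) (ha : 0 < a) (ht : 0 < t) :
    HasDerivAt (fun s : ℝ => (s / a) ^ p) (p * (t / a) ^ (p - 1) / a) t := by
  have h1 : HasDerivAt (fun s : ℝ => s / a) (1 / a) t := (hasDerivAt_id t).div_const a
  have h2 := Real.hasDerivAt_rpow_const (x := t / a) (p := p) (Or.inl (div_pos ht ha).ne')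
  have h3 := h2.comp t h1
  exact h3.congr_deriv (by ring)

/-- the smooth-fit identities at the optimal barrier `β₀*`, and the
vanishing of the second derivative of `G(·,·;β₀*)` at the barrier. -/
theorem stmt_6 (μA μL δ σA σL ρ ζ₁ ζ₂ α₀ β₀ : ℝ)
    (hσA : 0 < σA) (hσL : 0 < σL) (hρ₁ : -1 < ρ) (hρ₂ : ρ < 1)
    (hμ : μL < μA) (hδ : μA < δ)
    (hroot₁ : (1 / 2) * (σA ^ 2 + σL ^ 2 - 2 * ρ * σA * σL) * ζ₁ * (ζ₁ - 1)
      + (μA - μL) * ζ₁ + (μL - δ) = 0)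
    (hroot₂ : (1 / 2) * (σA ^ 2 + σL ^ 2 - 2 * ρ * σA * σL) * ζ₂ * (ζ₂ - 1)
      + (μA - μL) * ζ₂ + (μL - δ) = 0)
    (hζlt : ζ₁ < ζ₂) (hζ₁ : ζ₁ < 0) (hζ₂ : 1 < ζ₂)
    (hα₀ : 0 < α₀)
    (hβ₀ : β₀ = α₀ * (ζ₁ * (ζ₁ - 1) / (ζ₂ * (ζ₂ - 1))) ^ (1 / (ζ₂ - ζ₁))) :
    (β₀ / α₀) ^ (ζ₂ - ζ₁) = ζ₁ * (ζ₁ - 1) / (ζ₂ * (ζ₂ - 1)) ∧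
    ζ₁ * (ζ₁ - 1) * (β₀ / α₀) ^ ζ₁ = ζ₂ * (ζ₂ - 1) * (β₀ / α₀) ^ ζ₂ ∧
    ∀ x₂ : ℝ, 0 < x₂ →
      deriv (deriv (fun t => Gb α₀ ζ₁ ζ₂ β₀ t x₂)) (β₀ * x₂) = 0 := by
  have hq1 : 0 < ζ₁ * (ζ₁ - 1) := mul_pos_of_neg_of_neg hζ₁ (by linarith)
  have hq2 : 0 < ζ₂ * (ζ₂ - 1) := mul_pos (by linarith) (by linarith)
  have hrpos : 0 < ζ₁ * (ζ₁ - 1) / (ζ₂ * (ζ₂ - 1)) := div_pos hq1 hq2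
  have hζd : ζ₂ - ζ₁ ≠ 0 := sub_ne_zero.mpr (ne_of_gt hζlt)
  have hβα : β₀ / α₀ = (ζ₁ * (ζ₁ - 1) / (ζ₂ * (ζ₂ - 1))) ^ (1 / (ζ₂ - ζ₁)) := by
    rw [hβ₀]; field_simp
  have h1 : (β₀ / α₀) ^ (ζ₂ - ζ₁) = ζ₁ * (ζ₁ - 1) / (ζ₂ * (ζ₂ - 1)) := by
    rw [hβα, ← Real.rpow_mul hrpos.le, one_div_mul_cancel hζd, Real.rpow_one]
  have hb : 0 < β₀ / α₀ := by
    rw [hβα]; exact Real.rpow_pos_of_pos hrpos _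
  have hβ₀pos : 0 < β₀ := by
    have := mul_pos hb hα₀
    rwa [div_mul_cancel₀ _ (ne_of_gt hα₀)] at this
  have hsum : ζ₁ + (ζ₂ - ζ₁) = ζ₂ := by ring
  have hbe : (β₀ / α₀) ^ ζ₂ = (β₀ / α₀) ^ ζ₁ * (β₀ / α₀) ^ (ζ₂ - ζ₁) := by
    rw [← Real.rpow_add hb, hsum]
  have h2 : ζ₁ * (ζ₁ - 1) * (β₀ / α₀) ^ ζ₁ = ζ₂ * (ζ₂ - 1) * (β₀ / α₀) ^ ζ₂ := by
    rw [hbe, h1]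
    field_simp [show ζ₂ - 1 ≠ 0 by linarith, show ζ₂ ≠ 0 by linarith]
  refine ⟨h1, h2, ?_⟩
  intro x₂ hx₂
  have ha : 0 < α₀ * x₂ := mul_pos hα₀ hx₂
  have htpos : 0 < β₀ * x₂ := mul_pos hβ₀pos hx₂
  set D : ℝ := ζ₁ * (β₀ / α₀) ^ (ζ₁ - 1) - ζ₂ * (β₀ / α₀) ^ (ζ₂ - 1) with hD
  set g : ℝ → ℝ := fun t =>
    α₀ * x₂ * (ζ₁ * (t / (α₀ * x₂)) ^ (ζ₁ - 1) / (α₀ * x₂)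
      - ζ₂ * (t / (α₀ * x₂)) ^ (ζ₂ - 1) / (α₀ * x₂)) / D with hg
  have hfd : ∀ t, 0 < t → HasDerivAt (fun s => Gb α₀ ζ₁ ζ₂ β₀ s x₂) (g t) t := by
    intro t ht
    have := (((aux_hasDerivAt (α₀ * x₂) ζ₁ t ha ht).sub
      (aux_hasDerivAt (α₀ * x₂) ζ₂ t ha ht)).const_mul (α₀ * x₂)).div_const D
    have e : (fun s => Gb α₀ ζ₁ ζ₂ β₀ s x₂) = (fun x => α₀ * x₂ * ((fun s => (s / (α₀ * x₂)) ^ ζ₁) - fun s => (s / (α₀ * x₂)) ^ ζ₂) x / D) := by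
      funext s
      simp [Gb, hg, mul_sub, hD]
    rw [e]
    exact this
  have hev : deriv (fun s => Gb α₀ ζ₁ ζ₂ β₀ s x₂) =ᶠ[nhds (β₀ * x₂)] g :=
    Filter.eventuallyEq_of_mem (Ioi_mem_nhds htpos) (fun t ht => (hfd t ht).deriv)
  rw [hev.deriv_eq]
  have hgd := (((((aux_hasDerivAt (α₀ * x₂) (ζ₁ - 1) (β₀ * x₂) ha htpos).const_mul
      ζ₁).div_const (α₀ * x₂)).sub
    (((aux_hasDerivAt (α₀ * x₂) (ζ₂ - 1) (β₀ * x₂) ha htpos).const_mul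
      ζ₂).div_const (α₀ * x₂))).const_mul (α₀ * x₂)).div_const D
  rw [show deriv g (β₀ * x₂) = _ from hgd.deriv]
  have hba : β₀ * x₂ / (α₀ * x₂) = β₀ / α₀ := by
    rw [mul_div_mul_right _ _ (ne_of_gt hx₂)]
  rw [hba]
  have key : ζ₁ * (ζ₁ - 1) * (β₀ / α₀) ^ (ζ₁ - 1 - 1)
      = ζ₂ * (ζ₂ - 1) * (β₀ / α₀) ^ (ζ₂ - 1 - 1) := by
    have e1 : (β₀ / α₀) ^ (ζ₁ - 1 - 1) = (β₀ / α₀) ^ ζ₁ / (β₀ / α₀) ^ (2 : ℝ) := by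
      rw [show ζ₁ - 1 - 1 = ζ₁ - 2 from by ring, Real.rpow_sub hb]
    have e2 : (β₀ / α₀) ^ (ζ₂ - 1 - 1) = (β₀ / α₀) ^ ζ₂ / (β₀ / α₀) ^ (2 : ℝ) := by
      rw [show ζ₂ - 1 - 1 = ζ₂ - 2 from by ring, Real.rpow_sub hb]
    rw [e1, e2]
    linear_combination h2 / ((β₀ / α₀) ^ (2 : ℝ))
  rw [div_eq_zero_iff]
  left
  linear_combination (α₀ * x₂) / (α₀ * x₂) / (α₀ * x₂) * key
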